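/- Failure of FWER control without independence: suppose hypotheses A (false) and B (true) are functions of the same random outcome with rejection regions that partition the sample space: B is falsely rejected with probability p_B ≤ α/2, and on the complementary event A is rejected with a p-value P_A; conditional on A's rejection, a second true hypothesis C is tested at level α − P_A. If C's rejection probability at level a equals a (maximally powerful), then the total FWER equals p_B + E[(α − P_A)·1{A rejected}], which can exceed α. -/

import Mathlib

open MeasureTheory

lemma aux13_h1 : (Set.Ioc (3/4:ℝ) 1)ᶜ ∩ Set.Ioc 0 (3/8) = Set.Ioc 0 (3/8) := by
  rw [Set.inter_eq_right]
  intro x hx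
  simp only [Set.mem_compl_iff, Set.mem_Ioc, not_and, not_le]
  intro h; linarith [hx.2]

lemma aux13_B : ((volume.restrict (Set.Ioc 0 1)) (Set.Ioc (3/4:ℝ) 1)).toReal = 1/4 := by
  rw [Measure.restrict_apply measurableSet_Ioc]
  have : Set.Ioc (3/4:ℝ) 1 ∩ Set.Ioc 0 1 = Set.Ioc (3/4) 1 := by
    rw [Set.inter_eq_left]; exact Set.Ioc_subset_Ioc (by norm_num) le_rfl
  rw [this, Real.volume_Ioc, ENNReal.toReal_ofReal (by norm_num)]
  norm_num

lemma aux13_int :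
    (∫ ω in (Set.Ioc (3/4:ℝ) 1)ᶜ, ((1:ℝ)/2 - 0) ∂(volume.restrict (Set.Ioc 0 1))) = 3/8 := by
  have h2 : ((Set.Ioc (3/4:ℝ) 1)ᶜ) ∩ Set.Ioc 0 1 = Set.Ioc 0 (3/4) := by
    ext x
    simp only [Set.mem_inter_iff, Set.mem_compl_iff, Set.mem_Ioc, not_and, not_le]
    constructor
    · rintro ⟨h, h0, h1⟩
      refine ⟨h0, ?_⟩
      by_contra hc
      push_neg at hc
      linarith [h hc]
    · rintro ⟨h0, h34⟩
      exact ⟨fun h => absurd h (by linarith), h0, by linarith⟩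
  rw [setIntegral_const, measureReal_def, Measure.restrict_apply measurableSet_Ioc.compl, h2,
    Real.volume_Ioc, ENNReal.toReal_ofReal (by norm_num)]
  norm_num

lemma aux13_union :
    ((volume.restrict (Set.Ioc 0 1))
      (Set.Ioc (3/4:ℝ) 1 ∪ ((Set.Ioc (3/4:ℝ) 1)ᶜ ∩ Set.Ioc 0 (3/8)))).toReal = 5/8 := by
  rw [aux13_h1, Measure.restrict_apply (measurableSet_Ioc.union measurableSet_Ioc)]
  have hsub : Set.Ioc (3/4:ℝ) 1 ∪ Set.Ioc 0 (3/8) ⊆ Set.Ioc 0 1 := by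
    apply Set.union_subset
    · exact Set.Ioc_subset_Ioc (by norm_num) le_rfl
    · exact Set.Ioc_subset_Ioc le_rfl (by norm_num)
  rw [Set.inter_eq_left.mpr hsub]
  have hdisj : Disjoint (Set.Ioc (3/4:ℝ) 1) (Set.Ioc 0 (3/8)) := by
    rw [Set.disjoint_left]
    intro x hx hx'
    have := hx.1; have := hx'.2; linarith
  rw [measure_union hdisj measurableSet_Ioc, Real.volume_Ioc, Real.volume_Ioc,
    ← ENNReal.ofReal_add (by norm_num) (by norm_num), ENNReal.toReal_ofReal (by norm_num)]
  norm_num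

/-- Failure of FWER control without independence: there is a probability space with
events `Brej` (false rejection of the true hypothesis B) and `Arej` (rejection of
the false hypothesis A) partitioning the sample space, a p-value `PA` for A taking
values in `[0, α]` on `Arej`, and a rejection event `Crej` for the true hypothesis
C tested at the adjusted level `α − PA` whose conditional rejection probability is
maximal (`μ(Arej ∩ Crej) = ∫_{Arej} (α − PA) dμ`), such that `μ(Brej) ≤ α/2` but the
total familywise error `μ(Brej ∪ (Arej ∩ Crej)) = μ(Brej) + ∫_{Arej} (α − PA) dμ`
exceeds `α`. -/
theorem stmt_13 :
    ∃ (Ω : Type) (_ : MeasurableSpace Ω) (μ : Measure Ω) (_ : IsProbabilityMeasure μ)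
      (α : ℝ) (Brej Arej Crej : Set Ω) (PA : Ω → ℝ),
      α ∈ Set.Ioo (0 : ℝ) 1 ∧
      MeasurableSet Brej ∧ MeasurableSet Arej ∧ MeasurableSet Crej ∧
      Brej ∩ Arej = ∅ ∧ Brej ∪ Arej = Set.univ ∧
      (μ Brej).toReal ≤ α / 2 ∧
      (∀ ω ∈ Arej, 0 ≤ PA ω ∧ PA ω ≤ α) ∧
      (μ (Arej ∩ Crej)).toReal = ∫ ω in Arej, (α - PA ω) ∂μ ∧
      (μ (Brej ∪ (Arej ∩ Crej))).toReal
        = (μ Brej).toReal + ∫ ω in Arej, (α - PA ω) ∂μ ∧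
      α < (μ (Brej ∪ (Arej ∩ Crej))).toReal := by
  refine ⟨ℝ, inferInstance, volume.restrict (Set.Ioc 0 1), ?_, 1/2,
    Set.Ioc (3/4) 1, (Set.Ioc (3/4) 1)ᶜ, Set.Ioc 0 (3/8), fun _ => 0, ?_, ?_, ?_, ?_,
    ?_, ?_, ?_, ?_, ?_, ?_, ?_⟩
  · constructor
    rw [Measure.restrict_apply MeasurableSet.univ, Set.univ_inter, Real.volume_Ioc]
    norm_num
  · norm_num
  · exact measurableSet_Ioc
  · exact measurableSet_Ioc.compl
  · exact measurableSet_Ioc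
  · simp
  · simp
  · rw [aux13_B]; norm_num
  · intro ω _; norm_num
  · rw [aux13_int, aux13_h1, Measure.restrict_apply measurableSet_Ioc]
    have : Set.Ioc (0:ℝ) (3/8) ∩ Set.Ioc 0 1 = Set.Ioc 0 (3/8) := by
      rw [Set.inter_eq_left]; exact Set.Ioc_subset_Ioc le_rfl (by norm_num)
    rw [this, Real.volume_Ioc, ENNReal.toReal_ofReal (by norm_num)]
    norm_num
  · rw [aux13_union, aux13_int, aux13_B]; norm_num
  · rw [aux13_union]; norm_num
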